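/- arXiv:math/0602031 — 2 statements merged into one kernel-verified Lean document; each statement's English description precedes it below -/
import Mathlib

section
/- If x^α ∈ in_≥(I) for a local monomial order ≥ with opposite global order ⪰, then no nonzero functional L ∈ D_0[I] has in_⪰(L) = α. Equivalently, in_⪰(D_0[I]) is contained in the set of exponents of standard monomials of I w.r.t. ≥. -/
open MvPolynomial

/-- The constant-coefficient differential operator `∂^β = ∂₁^{β₁} ⋯ ∂ₙ^{βₙ}`
acting on `ℂ[x₁,…,xₙ]`. -/
noncomputable def diffOp {n : ℕ} (β : Fin n →₀ ℕ) : Module.End ℂ (MvPolynomial (Fin n) ℂ) :=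
  (List.ofFn fun i : Fin n => ((pderiv (R := ℂ) i).toLinearMap) ^ (β i)).prod

/-- The differential functional
`Δ_α(f) = (1/(α₁!⋯αₙ!)) ⋅ (∂^{|α|} f / ∂x^α) |_{x = p}`. -/
noncomputable def DeltaAt {n : ℕ} (p : Fin n → ℂ) (α : Fin n →₀ ℕ)
    (f : MvPolynomial (Fin n) ℂ) : ℂ :=
  (∏ i : Fin n, ((α i).factorial : ℂ))⁻¹ * eval p (diffOp α f)

/-- A functional `L = Σ c_α Δ_α` (given by its finitely supported coefficient
vector `c`) applied to a polynomial `f`. -/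
noncomputable def applyF {n : ℕ} (p : Fin n → ℂ) (c : (Fin n →₀ ℕ) →₀ ℂ)
    (f : MvPolynomial (Fin n) ℂ) : ℂ :=
  c.sum fun α a => a * DeltaAt p α f

/-- The local dual space `D_p[I]` of differential functionals (identified with
their coefficient vectors) annihilating the ideal `I` at the point `p`. -/
noncomputable def dualSpace {n : ℕ} (p : Fin n → ℂ) (I : Ideal (MvPolynomial (Fin n) ℂ)) :
    Submodule ℂ ((Fin n →₀ ℕ) →₀ ℂ) :=
  ⨅ f ∈ I, LinearMap.ker (Finsupp.linearCombination ℂ (fun α => DeltaAt p α f))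

/-- The total degree `|α|` of a multi-index. -/
def degOf {n : ℕ} (α : Fin n →₀ ℕ) : ℕ := α.sum fun _ k => k

/-- A global monomial order on multi-indices: a translation-invariant strict
linear order for which `0` is the smallest element. -/
structure GlobalMonomialOrder (n : ℕ) where
  lt : (Fin n →₀ ℕ) → (Fin n →₀ ℕ) → Prop
  irrefl : ∀ a, ¬ lt a a
  trans : ∀ a b c, lt a b → lt b c → lt a c
  total : ∀ a b, a ≠ b → lt a b ∨ lt b a
  add_right : ∀ a b c, lt a b → lt (a + c) (b + c)
  zero_lt : ∀ a, a ≠ 0 → lt 0 a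

/-- `m` is the `G`-maximal element of the set `s`. -/
def IsMaxOf {n : ℕ} (G : GlobalMonomialOrder n) (s : Set (Fin n →₀ ℕ)) (m : Fin n →₀ ℕ) : Prop :=
  m ∈ s ∧ ∀ a ∈ s, a = m ∨ G.lt a m

/-- `m` is the `G`-minimal element of the set `s`. -/
def IsMinOf {n : ℕ} (G : GlobalMonomialOrder n) (s : Set (Fin n →₀ ℕ)) (m : Fin n →₀ ℕ) : Prop :=
  m ∈ s ∧ ∀ a ∈ s, a = m ∨ G.lt m a

/-- `β = in_≥(f)`: the exponent of the leading monomial of `f` with respect to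
the local order `≥` opposite to the global order `G`; since the two orders are
opposite, it is the `G`-minimal element of the support of `f`. -/
def IsLocalInitialExp {n : ℕ} (G : GlobalMonomialOrder n) (f : MvPolynomial (Fin n) ℂ)
    (β : Fin n →₀ ℕ) : Prop :=
  IsMinOf G (↑f.support) β

/-- Exponents of monomials lying in the initial ideal `in_≥(I)` with respect to
the local order opposite to `G`: those divisible by the initial exponent of
some nonzero element of `I`.  Standard monomials are exactly the monomials
whose exponents are NOT in this set. -/
def initIdealExp {n : ℕ} (G : GlobalMonomialOrder n) (I : Ideal (MvPolynomial (Fin n) ℂ)) :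
    Set (Fin n →₀ ℕ) :=
  {γ | ∃ f ∈ I, f ≠ 0 ∧ ∃ β, IsLocalInitialExp G f β ∧ β ≤ γ}

/-- The initial support `in_⪰(D_p[I])` of the local dual space: the set of
`G`-initial exponents of nonzero functionals in `D_p[I]`. -/
def initSupp {n : ℕ} (G : GlobalMonomialOrder n) (p : Fin n → ℂ)
    (I : Ideal (MvPolynomial (Fin n) ℂ)) : Set (Fin n →₀ ℕ) :=
  {β | ∃ c ∈ dualSpace p I, c ≠ 0 ∧ IsMaxOf G (↑c.support) β}

/-- `p` is an isolated solution of the system generating `I`. -/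
def IsIsolatedSolution {n : ℕ} (p : Fin n → ℂ) (I : Ideal (MvPolynomial (Fin n) ℂ)) : Prop :=
  (∀ f ∈ I, eval p f = 0) ∧
    ∃ U : Set (Fin n → ℂ), IsOpen U ∧ p ∈ U ∧
      ∀ q ∈ U, (∀ f ∈ I, eval q f = 0) → q = p


section AuxLemmas
open Finsupp

private lemma desc_aux' (m k : ℕ) : (m : ℂ) * ((m - 1).descFactorial k) = (m.descFactorial (k+1)) := by
  cases m with
  | zero => simp
  | succ m => push_cast [Nat.succ_descFactorial_succ]; ring

private lemma pderiv_pow_monomial' {n : ℕ} (i : Fin n) (k : ℕ) (δ : Fin n →₀ ℕ) (a : ℂ) :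
    (((pderiv (R := ℂ) i).toLinearMap) ^ k) (monomial δ a) =
      monomial (δ - single i k) (a * ((δ i).descFactorial k)) := by
  induction k generalizing δ a with
  | zero => simp
  | succ k ih =>
    rw [pow_succ, Module.End.mul_apply]
    have : ((pderiv (R := ℂ) i).toLinearMap) (monomial δ a) =
        monomial (δ - single i 1) (a * δ i) := by
      simp [pderiv_monomial]
    rw [this, ih]
    congr 1
    · rw [tsub_tsub, ← Finsupp.single_add, add_comm]
    · simp only [Finsupp.tsub_apply, Finsupp.single_apply, if_pos rfl, if_true]
      rw [mul_assoc, desc_aux']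

private lemma list_sum_single_apply' {n : ℕ} (γ : Fin n →₀ ℕ) (i : Fin n) :
    ∀ l : List (Fin n), i ∉ l → ((l.map fun j => Finsupp.single j (γ j)).sum) i = 0 := by
  intro l
  induction l with
  | nil => simp
  | cons j r ihr =>
    intro h
    simp only [List.map_cons, List.sum_cons, Finsupp.add_apply]
    simp only [List.mem_cons, not_or] at h
    rw [ihr h.2, Finsupp.single_apply, if_neg (fun hji => h.1 hji.symm)]

private lemma list_prod_pderiv_monomial' {n : ℕ} (γ : Fin n →₀ ℕ) (a : ℂ) :
    ∀ (l : List (Fin n)), l.Nodup → ∀ (δ : Fin n →₀ ℕ),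
    (l.map fun i => ((pderiv (R := ℂ) i).toLinearMap) ^ (γ i)).prod (monomial δ a) =
      monomial (δ - (l.map fun i => Finsupp.single i (γ i)).sum)
        (a * ((l.map fun i => (((δ i).descFactorial (γ i)) : ℂ)).prod)) := by
  intro l
  induction l with
  | nil => intro _ δ; simp
  | cons i rest ih =>
    intro hnd δ
    have hi : i ∉ rest := (List.nodup_cons.mp hnd).1
    have hr : rest.Nodup := (List.nodup_cons.mp hnd).2
    rw [List.map_cons, List.prod_cons, Module.End.mul_apply, ih hr δ]
    rw [pderiv_pow_monomial']
    have hS : (δ - (rest.map fun i => Finsupp.single i (γ i)).sum) i = δ i := by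
      rw [Finsupp.tsub_apply, list_sum_single_apply' γ i rest hi]
      simp
    rw [hS, List.map_cons, List.sum_cons, List.map_cons, List.prod_cons]
    congr 1
    · rw [tsub_tsub, add_comm]
    · ring

private lemma diffOp_monomial' {n : ℕ} (γ δ : Fin n →₀ ℕ) (a : ℂ) :
    diffOp γ (monomial δ a) =
      monomial (δ - γ) (a * ∏ i, (((δ i).descFactorial (γ i)) : ℂ)) := by
  have hγ : ((List.finRange n).map fun i => Finsupp.single i (γ i)).sum = γ := by
    rw [← List.ofFn_eq_map, List.sum_ofFn]
    ext j
    rw [Finsupp.finset_sum_apply]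
    simp [Finsupp.single_apply]
  have hp : ((List.finRange n).map fun i => (((δ i).descFactorial (γ i)) : ℂ)).prod
      = ∏ i, (((δ i).descFactorial (γ i)) : ℂ) := by
    rw [← List.ofFn_eq_map, List.prod_ofFn]
  rw [diffOp, List.ofFn_eq_map,
    list_prod_pderiv_monomial' γ a (List.finRange n) (List.nodup_finRange n) δ, hγ, hp]

private lemma eval_zero_diffOp_monomial' {n : ℕ} (γ δ : Fin n →₀ ℕ) (a : ℂ) :
    eval (0 : Fin n → ℂ) (diffOp γ (monomial δ a)) =
      if δ = γ then (∏ i, ((γ i).factorial : ℂ)) * a else 0 := by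
  rw [diffOp_monomial', eval_monomial]
  by_cases h : δ = γ
  · subst h
    simp only [if_pos rfl, tsub_self]
    rw [Finsupp.prod_pow]
    simp [Nat.descFactorial_self, mul_comm]
  · rw [if_neg h]
    by_cases hle : δ ≤ γ
    · have : ∃ i, δ i < γ i := by
        by_contra hc
        push_neg at hc
        exact h (le_antisymm hle fun i => hc i)
      obtain ⟨i, hi⟩ := this
      have : (((δ i).descFactorial (γ i)) : ℂ) = 0 := by
        rw [Nat.descFactorial_eq_zero_iff_lt.mpr hi]; simp
      rw [Finset.prod_eq_zero (Finset.mem_univ i) this]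
      ring
    · have hne : δ - γ ≠ 0 := fun hz => hle (tsub_eq_zero_iff_le.mp hz)
      obtain ⟨i, hi⟩ : ∃ i, (δ - γ) i ≠ 0 := by
        by_contra hc; push_neg at hc; exact hne (Finsupp.ext hc)
      simp only [Pi.zero_apply]
      have h0 : ((δ - γ).prod fun _ e => (0:ℂ) ^ e) = 0 := by
        apply Finset.prod_eq_zero (Finsupp.mem_support_iff.mpr hi)
        rw [Finsupp.tsub_apply] at hi
        exact zero_pow hi
      rw [h0, mul_zero]

private lemma DeltaAt_zero_eq_coeff' {n : ℕ} (γ : Fin n →₀ ℕ) (f : MvPolynomial (Fin n) ℂ) :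
    DeltaAt 0 γ f = coeff γ f := by
  have hfac : (∏ i, ((γ i).factorial : ℂ)) ≠ 0 := by
    apply Finset.prod_ne_zero_iff.mpr
    intro i _
    exact_mod_cast Nat.factorial_ne_zero _
  induction f using MvPolynomial.induction_on' with
  | monomial δ a =>
    rw [DeltaAt, eval_zero_diffOp_monomial', coeff_monomial]
    by_cases h : δ = γ
    · rw [if_pos h, if_pos h, ← mul_assoc, inv_mul_cancel₀ hfac, one_mul]
    · rw [if_neg h, if_neg h, mul_zero]
  | add p q hp hq =>
    rw [DeltaAt] at hp hq ⊢
    rw [map_add, map_add, mul_add, hp, hq, coeff_add]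

private lemma G_asymm {n : ℕ} (G : GlobalMonomialOrder n) {a b : Fin n →₀ ℕ}
    (h1 : G.lt a b) (h2 : G.lt b a) : False :=
  G.irrefl a (G.trans a b a h1 h2)

end AuxLemmas

/-- if `x^α ∈ in_≥(I)` then no nonzero functional `L ∈ D_0[I]`
has `in_⪰(L) = α`; equivalently, `in_⪰(D_0[I])` is contained in the set of
exponents of standard monomials of `I` w.r.t. `≥`. -/
theorem initSupp_subset_standard {n : ℕ} (G : GlobalMonomialOrder n)
    (I : Ideal (MvPolynomial (Fin n) ℂ)) :
    (∀ α ∈ initIdealExp G I,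
      ¬ ∃ c ∈ dualSpace (0 : Fin n → ℂ) I, c ≠ 0 ∧ IsMaxOf G (↑c.support) α) ∧
    initSupp G 0 I ⊆ {γ : Fin n →₀ ℕ | γ ∉ initIdealExp G I} := by
  have main : ∀ α ∈ initIdealExp G I,
      ¬ ∃ c ∈ dualSpace (0 : Fin n → ℂ) I, c ≠ 0 ∧ IsMaxOf G (↑c.support) α := by
    intro α hα ⟨c, hc, hc0, hmax⟩
    obtain ⟨f, hfI, hf0, β, ⟨hβsupp, hβmin⟩, hβle⟩ := hα
    set δ := α - β with hδ
    have hβδ : β + δ = α := add_tsub_cancel_of_le hβle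
    set g := monomial δ (1:ℂ) * f with hg
    have hgI : g ∈ I := I.mul_mem_left _ hfI
    have hcg : Finsupp.linearCombination ℂ (fun γ => DeltaAt (0 : Fin n → ℂ) γ g) c = 0 := by
      have := (Submodule.mem_iInf _).mp ((Submodule.mem_iInf _).mp hc g) hgI
      exact LinearMap.mem_ker.mp this
    have hαs : α ∈ c.support := hmax.1
    have hcα : c α ≠ 0 := Finsupp.mem_support_iff.mp hαs
    have hcoeffα : coeff α g = coeff β f := by
      rw [hg, ← hβδ, add_comm β δ, coeff_monomial_mul, one_mul]
    have hcoeffβ : coeff β f ≠ 0 := Finsupp.mem_support_iff.mp hβsupp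
    have hzero : ∀ γ ∈ c.support, γ ≠ α → c γ * coeff γ g = 0 := by
      intro γ hγs hγα
      have hlt : G.lt γ α := by
        rcases hmax.2 γ hγs with h | h
        · exact absurd h hγα
        · exact h
      have hcγg : coeff γ g = 0 := by
        by_contra hne
        rw [hg, coeff_monomial_mul'] at hne
        by_cases hle : δ ≤ γ
        · rw [if_pos hle, one_mul] at hne
          have hmem : γ - δ ∈ f.support := Finsupp.mem_support_iff.mpr hne
          have hγeq : (γ - δ) + δ = γ := tsub_add_cancel_of_le hle
          rcases hβmin (γ - δ) hmem with h | h
          · exact hγα (by rw [← hγeq, h, hβδ])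
          · have := G.add_right β (γ - δ) δ h
            rw [hβδ, hγeq] at this
            exact G_asymm G hlt this
        · rw [if_neg hle] at hne
          exact hne rfl
      rw [hcγg, mul_zero]
    have hsum : Finsupp.linearCombination ℂ (fun γ => DeltaAt (0 : Fin n → ℂ) γ g) c
        = c α * coeff α g := by
      rw [Finsupp.linearCombination_apply, Finsupp.sum]
      rw [Finset.sum_eq_single α]
      · rw [DeltaAt_zero_eq_coeff', smul_eq_mul]
      · intro γ hγs hγα
        rw [DeltaAt_zero_eq_coeff', smul_eq_mul]
        exact hzero γ hγs hγα
      · intro h; exact absurd hαs h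
    rw [hsum, hcoeffα] at hcg
    exact (mul_ne_zero hcα hcoeffβ) hcg
  refine ⟨main, ?_⟩
  intro γ hγ hmem
  obtain ⟨c, hc, hc0, hmax⟩ := hγ
  exact main γ hmem ⟨c, hc, hc0, hmax⟩
end

section
/- Let x* be an isolated solution of F(x) = 0 with corank-1 Jacobian A(x*), and let λ ∈ ker A(x*) be nonzero. Then x* is a solution of the augmented system G(x) = (f_1,…,f_N, g_1,…,g_N) = 0 where g_i(x) = Σ_j λ_j ∂f_i/∂x_j, and the multiplicity of x* as a solution of G = 0 is strictly less than its multiplicity as a solution of F = 0, provided the multiplicity of x* in F is at least 2. -/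
open MvPolynomial

/-! ### Auxiliary lemmas -/

lemma pderiv_commute' {n : ℕ} (i j : Fin n) (q : MvPolynomial (Fin n) ℂ) :
    pderiv i (pderiv j q) = pderiv j (pderiv i q) := by
  induction q using MvPolynomial.induction_on with
  | C a => simp
  | add p q hp hq => simp [hp, hq]
  | mul_X p k hp =>
    simp only [pderiv_mul, pderiv_X, map_add, hp, Pi.single_apply]
    split_ifs <;> simp <;> ring

lemma ofFn_prod_mul' {M : Type*} [Monoid M] : ∀ {n : ℕ} (A B : Fin n → M),
    (∀ i j, Commute (B i) (A j)) →
    (List.ofFn fun i => A i * B i).prod = (List.ofFn A).prod * (List.ofFn B).prod := by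
  intro n
  induction n with
  | zero => simp
  | succ m ih =>
    intro A B h
    rw [List.ofFn_succ, List.ofFn_succ, List.ofFn_succ, List.prod_cons, List.prod_cons,
      List.prod_cons, ih (fun i => A i.succ) (fun i => B i.succ) (fun i j => h _ _)]
    have hc : Commute (B 0) ((List.ofFn fun i : Fin m => A i.succ).prod) := by
      apply Commute.list_prod_right
      intro x hx
      rw [List.mem_ofFn] at hx
      obtain ⟨i, rfl⟩ := hx
      exact h 0 i.succ
    rw [mul_assoc, mul_assoc, ← mul_assoc (B 0), hc.eq, mul_assoc]

lemma ofFn_prod_single' {M : Type*} [Monoid M] : ∀ {n : ℕ} (A : Fin n → M) (j : Fin n),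
    (∀ i, i ≠ j → A i = 1) → (List.ofFn A).prod = A j := by
  intro n
  induction n with
  | zero => exact fun A j => j.elim0
  | succ m ih =>
    intro A j h
    rw [List.ofFn_succ, List.prod_cons]
    rcases eq_or_ne j 0 with rfl | hj
    · have : ∀ i : Fin m, A i.succ = 1 := fun i => h i.succ (Fin.succ_ne_zero i)
      simp [this]
    · rw [h 0 (Ne.symm hj), one_mul]
      obtain ⟨k, rfl⟩ := Fin.exists_succ_eq.2 hj
      exact ih (fun i => A i.succ) k fun i hi => h i.succ (by simpa using hi)

lemma P_commute {n : ℕ} (i j : Fin n) :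
    Commute ((pderiv (R := ℂ) i).toLinearMap : Module.End ℂ (MvPolynomial (Fin n) ℂ))
      ((pderiv (R := ℂ) j).toLinearMap) := by
  apply LinearMap.ext
  intro q
  exact pderiv_commute' i j q

lemma diffOp_add {n : ℕ} (β γ : Fin n →₀ ℕ) :
    diffOp (β + γ) = diffOp β * diffOp γ := by
  unfold diffOp
  have h1 : (fun i : Fin n => ((pderiv (R := ℂ) i).toLinearMap) ^ ((β + γ) i))
      = fun i => ((pderiv (R := ℂ) i).toLinearMap) ^ (β i) *
          ((pderiv (R := ℂ) i).toLinearMap) ^ (γ i) :=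
    funext fun i => by rw [Finsupp.add_apply, pow_add]
  rw [h1, ofFn_prod_mul']
  intro i j
  exact (P_commute i j).pow_pow _ _

lemma diffOp_single {n : ℕ} (j : Fin n) :
    diffOp (Finsupp.single j 1) = (pderiv (R := ℂ) j).toLinearMap := by
  unfold diffOp
  rw [ofFn_prod_single' _ j]
  · simp
  · intro i hi
    simp [Finsupp.single_apply, (Ne.symm hi)]

lemma diffOp_zero {n : ℕ} : diffOp (0 : Fin n →₀ ℕ) = 1 := by
  unfold diffOp
  simp

lemma diffOp_succ {n : ℕ} (α : Fin n →₀ ℕ) (j : Fin n) (q : MvPolynomial (Fin n) ℂ) :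
    diffOp (α + Finsupp.single j 1) q = diffOp α (pderiv j q) := by
  rw [diffOp_add, diffOp_single]
  rfl

lemma prodFact_ne_zero {n : ℕ} (α : Fin n →₀ ℕ) : (∏ i : Fin n, ((α i).factorial : ℂ)) ≠ 0 :=
  Finset.prod_ne_zero_iff.2 fun i _ => Nat.cast_ne_zero.2 (α i).factorial_ne_zero

lemma prodFact_succ {n : ℕ} (α : Fin n →₀ ℕ) (j : Fin n) :
    (∏ i : Fin n, (((α + Finsupp.single j 1 : Fin n →₀ ℕ) i).factorial : ℂ))
      = ((α j : ℂ) + 1) * ∏ i : Fin n, ((α i).factorial : ℂ) := by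
  rw [← Finset.prod_erase_mul _ _ (Finset.mem_univ j),
      ← Finset.prod_erase_mul _ _ (Finset.mem_univ j)]
  have h1 : ∀ i ∈ Finset.univ.erase j,
      (((α + Finsupp.single j 1 : Fin n →₀ ℕ) i).factorial : ℂ) = ((α i).factorial : ℂ) := by
    intro i hi
    rw [Finsupp.add_apply, Finsupp.single_apply, if_neg (Ne.symm (Finset.mem_erase.1 hi).1),
      add_zero]
  rw [Finset.prod_congr rfl h1]
  have h2 : (α + Finsupp.single j 1 : Fin n →₀ ℕ) j = α j + 1 := by
    rw [Finsupp.add_apply, Finsupp.single_apply, if_pos rfl]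
  rw [h2, Nat.factorial_succ]
  push_cast
  ring

lemma natCast_succ_ne_zero {n : ℕ} (α : Fin n →₀ ℕ) (j : Fin n) : ((α j : ℂ) + 1) ≠ 0 := by
  intro hc
  have := congrArg Complex.re hc
  simp [Complex.add_re] at this
  exact absurd this (by positivity)

lemma DeltaAt_zero_index {n : ℕ} (p : Fin n → ℂ) (q : MvPolynomial (Fin n) ℂ) :
    DeltaAt p 0 q = eval p q := by
  unfold DeltaAt
  rw [diffOp_zero]
  simp

lemma DeltaAt_pderiv {n : ℕ} (p : Fin n → ℂ) (α : Fin n →₀ ℕ) (j : Fin n)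
    (q : MvPolynomial (Fin n) ℂ) :
    DeltaAt p α (pderiv j q) = ((α j : ℂ) + 1) * DeltaAt p (α + Finsupp.single j 1) q := by
  unfold DeltaAt
  rw [diffOp_succ, prodFact_succ, mul_inv]
  have h := prodFact_ne_zero α
  have h2 := natCast_succ_ne_zero α j
  field_simp

lemma DeltaAt_add {n : ℕ} (p : Fin n → ℂ) (α : Fin n →₀ ℕ) (q r : MvPolynomial (Fin n) ℂ) :
    DeltaAt p α (q + r) = DeltaAt p α q + DeltaAt p α r := by
  unfold DeltaAt; rw [map_add, map_add]; ring

lemma DeltaAt_C_mul {n : ℕ} (p : Fin n → ℂ) (α : Fin n →₀ ℕ) (a : ℂ)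
    (q : MvPolynomial (Fin n) ℂ) :
    DeltaAt p α (C a * q) = a * DeltaAt p α q := by
  unfold DeltaAt
  rw [show (C a * q : MvPolynomial (Fin n) ℂ) = a • q from (MvPolynomial.smul_eq_C_mul q a).symm,
    map_smul, MvPolynomial.smul_eq_C_mul, eval_mul, eval_C]
  ring

/-! ### The shift operators and the polynomial embedding -/

/-- `σ_j` sends `Δ_α` to `(α_j + 1) Δ_{α+e_j}`; it is the adjoint of `∂_j`. -/
noncomputable def sigmaJ {n : ℕ} (j : Fin n) :
    ((Fin n →₀ ℕ) →₀ ℂ) →ₗ[ℂ] ((Fin n →₀ ℕ) →₀ ℂ) :=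
  Finsupp.lsum ℂ fun α => LinearMap.toSpanSingleton ℂ _
    (((α j : ℂ) + 1) • Finsupp.single (α + Finsupp.single j 1) (1 : ℂ))

/-- The embedding of coefficient vectors into polynomials:
`c ↦ Σ_α (c_α / α!) x^α`. -/
noncomputable def PsiMap {n : ℕ} : ((Fin n →₀ ℕ) →₀ ℂ) →ₗ[ℂ] MvPolynomial (Fin n) ℂ :=
  Finsupp.lsum ℂ fun α => LinearMap.toSpanSingleton ℂ _
    ((∏ i : Fin n, ((α i).factorial : ℂ))⁻¹ • monomial α 1)

lemma PsiMap_single {n : ℕ} (α : Fin n →₀ ℕ) (a : ℂ) :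
    PsiMap (Finsupp.single α a)
      = (a * (∏ i : Fin n, ((α i).factorial : ℂ))⁻¹) • monomial α 1 := by
  rw [PsiMap, Finsupp.lsum_single, LinearMap.toSpanSingleton_apply, smul_smul]

lemma coeff_PsiMap {n : ℕ} (c : (Fin n →₀ ℕ) →₀ ℂ) (α : Fin n →₀ ℕ) :
    coeff α (PsiMap c) = (∏ i : Fin n, ((α i).factorial : ℂ))⁻¹ * c α := by
  rw [PsiMap, Finsupp.lsum_apply, Finsupp.sum, coeff_sum]
  rw [Finset.sum_eq_single α (fun β hβ hne => ?_) (fun hα => ?_)]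
  · simp [LinearMap.toSpanSingleton_apply, coeff_monomial, mul_comm]
  · simp only [LinearMap.toSpanSingleton_apply, coeff_smul, coeff_monomial]
    rw [if_neg hne]
    simp
  · rw [Finsupp.notMem_support_iff.1 hα]
    simp

lemma PsiMap_injective {n : ℕ} : Function.Injective (PsiMap (n := n)) := by
  rw [injective_iff_map_eq_zero]
  intro c hc
  ext α
  have := coeff_PsiMap c α
  rw [hc, coeff_zero] at this
  have h := prodFact_ne_zero α
  field_simp at this
  simp [← this]

lemma PsiMap_sigmaJ {n : ℕ} (j : Fin n) (c : (Fin n →₀ ℕ) →₀ ℂ) :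
    PsiMap (sigmaJ j c) = X j * PsiMap c := by
  have : PsiMap.comp (sigmaJ j) = (LinearMap.mulLeft ℂ (X j : MvPolynomial (Fin n) ℂ)).comp
      PsiMap := by
    apply Finsupp.lhom_ext
    intro α a
    simp only [LinearMap.comp_apply, LinearMap.mulLeft_apply]
    rw [sigmaJ, Finsupp.lsum_single, LinearMap.toSpanSingleton_apply, PsiMap_single,
      map_smul, map_smul, PsiMap_single]
    rw [smul_smul, smul_smul]
    rw [Algebra.mul_smul_comm]
    rw [show (X j : MvPolynomial (Fin n) ℂ) * monomial α 1 = monomial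
      (α + Finsupp.single j 1) 1 by
        rw [add_comm, monomial_single_add, pow_one]]
    congr 1
    have h2 := natCast_succ_ne_zero α j
    have key : ((α j : ℂ) + 1) *
        (∏ i : Fin n, (((α + Finsupp.single j 1 : Fin n →₀ ℕ) i).factorial : ℂ))⁻¹
        = (∏ i : Fin n, ((α i).factorial : ℂ))⁻¹ := by
      rw [prodFact_succ, mul_inv, ← mul_assoc, mul_inv_cancel₀ h2, one_mul]
    rw [one_mul, mul_assoc, key]
  exact congrArg (fun φ => φ c) this

/-- `applyF` is the linear combination functional. -/
lemma applyF_eq {n : ℕ} (p : Fin n → ℂ) (c : (Fin n →₀ ℕ) →₀ ℂ) (q : MvPolynomial (Fin n) ℂ) :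
    applyF p c q = Finsupp.linearCombination ℂ (fun α => DeltaAt p α q) c := by
  rw [Finsupp.linearCombination_apply, applyF]
  rfl

lemma applyF_sigmaJ {n : ℕ} (p : Fin n → ℂ) (j : Fin n) (c : (Fin n →₀ ℕ) →₀ ℂ)
    (q : MvPolynomial (Fin n) ℂ) :
    applyF p (sigmaJ j c) q = applyF p c (pderiv j q) := by
  rw [applyF_eq, applyF_eq]
  have : (Finsupp.linearCombination ℂ (fun α => DeltaAt p α q)).comp (sigmaJ j)
      = Finsupp.linearCombination ℂ (fun α => DeltaAt p α (pderiv j q)) := by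
    apply Finsupp.lhom_ext
    intro α a
    simp only [LinearMap.comp_apply]
    rw [sigmaJ, Finsupp.lsum_single, LinearMap.toSpanSingleton_apply,
      map_smul, map_smul, Finsupp.linearCombination_single, Finsupp.linearCombination_single]
    rw [DeltaAt_pderiv]
    simp only [smul_eq_mul]
    ring
  exact congrArg (fun φ => φ c) this

lemma applyF_add_right {n : ℕ} (p : Fin n → ℂ) (c : (Fin n →₀ ℕ) →₀ ℂ)
    (q r : MvPolynomial (Fin n) ℂ) :
    applyF p c (q + r) = applyF p c q + applyF p c r := by
  rw [applyF, applyF, applyF, ← Finsupp.sum_add]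
  apply Finsupp.sum_congr
  intro α _
  rw [DeltaAt_add]
  ring

lemma applyF_C_mul_right {n : ℕ} (p : Fin n → ℂ) (c : (Fin n →₀ ℕ) →₀ ℂ) (a : ℂ)
    (q : MvPolynomial (Fin n) ℂ) :
    applyF p c (C a * q) = a * applyF p c q := by
  rw [applyF, applyF, Finsupp.mul_sum]
  apply Finsupp.sum_congr
  intro α _
  rw [DeltaAt_C_mul]
  ring

lemma mem_dualSpace {n : ℕ} (p : Fin n → ℂ) (I : Ideal (MvPolynomial (Fin n) ℂ))
    (c : (Fin n →₀ ℕ) →₀ ℂ) :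
    c ∈ dualSpace p I ↔ ∀ q ∈ I, applyF p c q = 0 := by
  rw [dualSpace]
  simp only [Submodule.mem_iInf, LinearMap.mem_ker]
  constructor
  · intro h q hq
    rw [applyF_eq]
    exact h q hq
  · intro h q hq
    rw [← applyF_eq]
    exact h q hq


lemma applyF_zero_right {n : ℕ} (p : Fin n → ℂ) (c : (Fin n →₀ ℕ) →₀ ℂ) :
    applyF p c 0 = 0 := by
  rw [applyF, Finsupp.sum]
  apply Finset.sum_eq_zero
  intro α _
  have : DeltaAt p α 0 = 0 := by rw [DeltaAt, map_zero, map_zero, mul_zero]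
  rw [this, mul_zero]

lemma applyF_sum_right {n : ℕ} {ι : Type*} [DecidableEq ι] (p : Fin n → ℂ) (c : (Fin n →₀ ℕ) →₀ ℂ)
    (s : Finset ι) (h : ι → MvPolynomial (Fin n) ℂ) :
    applyF p c (∑ j ∈ s, h j) = ∑ j ∈ s, applyF p c (h j) := by
  induction s using Finset.induction_on with
  | empty => simpa using applyF_zero_right p c
  | insert _ _ hx ih =>
    rw [Finset.sum_insert hx, Finset.sum_insert hx, applyF_add_right, ih]

lemma sigmaJ_apply_zero {n : ℕ} (j : Fin n) (c : (Fin n →₀ ℕ) →₀ ℂ) :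
    (sigmaJ j c) 0 = 0 := by
  rw [sigmaJ, Finsupp.lsum_apply, Finsupp.sum_apply, Finsupp.sum]
  apply Finset.sum_eq_zero
  intro α _
  have hne : (α + Finsupp.single j 1 : Fin n →₀ ℕ) ≠ 0 := by
    intro hc
    have : (α + Finsupp.single j 1 : Fin n →₀ ℕ) j = 0 := by rw [hc]; rfl
    rw [Finsupp.add_apply, Finsupp.single_apply, if_pos rfl] at this
    omega
  simp only [LinearMap.toSpanSingleton_apply, Finsupp.smul_apply,
    Finsupp.single_eq_of_ne hne]
  simp

/-- first-order deflation with fixed multipliers: if `x*` is an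
isolated solution of `F = 0` with corank-1 Jacobian and `0 ≠ λ ∈ ker A(x*)`,
then `x*` solves the augmented system `G = (f₁,…,f_N, g₁,…,g_N)`, where
`g_i = Σ_j λ_j ∂f_i/∂x_j`, and — provided the multiplicity of `x*` in `F = 0`
is at least `2` — the multiplicity of `x*` in `G = 0` is strictly smaller. -/
theorem first_order_deflation_fixed_multipliers {n N : ℕ}
    (f : Fin N → MvPolynomial (Fin n) ℂ) (xs : Fin n → ℂ)
    (hiso : IsIsolatedSolution xs (Ideal.span (Set.range f)))
    (hcorank : (Matrix.rank (Matrix.of fun i : Fin N => fun j : Fin n =>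
        eval xs (pderiv j (f i)))) = n - 1)
    (lam : Fin n → ℂ) (hlam : lam ≠ 0)
    (hker : ∀ i, ∑ j, eval xs (pderiv j (f i)) * lam j = 0)
    (hmult : 2 ≤ Module.finrank ℂ (dualSpace xs (Ideal.span (Set.range f)))) :
    (∀ i, eval xs (∑ j, C (lam j) * pderiv j (f i)) = 0) ∧
    Module.finrank ℂ
        (dualSpace xs (Ideal.span
          (Set.range f ∪ Set.range fun i => ∑ j, C (lam j) * pderiv j (f i))))
      < Module.finrank ℂ (dualSpace xs (Ideal.span (Set.range f))) := by
  classical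
  set g : Fin N → MvPolynomial (Fin n) ℂ := fun i => ∑ j, C (lam j) * pderiv j (f i) with hg
  set I : Ideal (MvPolynomial (Fin n) ℂ) := Ideal.span (Set.range f) with hI
  set J : Ideal (MvPolynomial (Fin n) ℂ) := Ideal.span (Set.range f ∪ Set.range g) with hJ
  set Dlam : MvPolynomial (Fin n) ℂ → MvPolynomial (Fin n) ℂ :=
    fun q => ∑ j, C (lam j) * pderiv j q with hDlam
  have part1 : ∀ i, eval xs (∑ j, C (lam j) * pderiv j (f i)) = 0 := by
    intro i
    rw [map_sum, ← hker i]
    exact Finset.sum_congr rfl fun j _ => by rw [eval_mul, eval_C, mul_comm]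
  refine ⟨part1, ?_⟩
  have Dlam_mul : ∀ q r, Dlam (q * r) = Dlam q * r + q * Dlam r := by
    intro q r
    simp only [hDlam, pderiv_mul, mul_add, Finset.sum_add_distrib, Finset.sum_mul,
      Finset.mul_sum]
    congr 1
    · exact Finset.sum_congr rfl fun j _ => by ring
    · exact Finset.sum_congr rfl fun j _ => by ring
  -- every element of I is in J and its λ-derivative is in J
  have claim1 : ∀ q ∈ I, q ∈ J ∧ Dlam q ∈ J := by
    intro q hq
    induction hq using Submodule.span_induction with
    | mem x hx =>
      obtain ⟨i, rfl⟩ := hx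
      exact ⟨Ideal.subset_span (Or.inl ⟨i, rfl⟩), Ideal.subset_span (Or.inr ⟨i, rfl⟩)⟩
    | zero => constructor <;> simp [hDlam]
    | add x y hx hy ihx ihy =>
      refine ⟨J.add_mem ihx.1 ihy.1, ?_⟩
      have : Dlam (x + y) = Dlam x + Dlam y := by
        simp [hDlam, mul_add, Finset.sum_add_distrib]
      rw [this]; exact J.add_mem ihx.2 ihy.2
    | smul r x hx ihx =>
      rw [smul_eq_mul]
      refine ⟨Ideal.mul_mem_left J r ihx.1, ?_⟩
      rw [Dlam_mul]
      exact J.add_mem (Ideal.mul_mem_left J (Dlam r) ihx.1) (Ideal.mul_mem_left J r ihx.2)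
  -- the shift operator Σ_j λ_j σ_j
  set SigL : ((Fin n →₀ ℕ) →₀ ℂ) →ₗ[ℂ] ((Fin n →₀ ℕ) →₀ ℂ) :=
    ∑ j, lam j • sigmaJ j with hSigL
  have SigL_apply : ∀ c, SigL c = ∑ j, lam j • sigmaJ j c := by
    intro c
    rw [hSigL, LinearMap.sum_apply]
    exact Finset.sum_congr rfl fun j _ => rfl
  have applyF_Sig : ∀ c q, applyF xs (SigL c) q = applyF xs c (Dlam q) := by
    intro c q
    rw [applyF_eq, SigL_apply, map_sum, hDlam, applyF_sum_right]
    refine Finset.sum_congr rfl fun j _ => ?_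
    rw [map_smul, applyF_C_mul_right, smul_eq_mul, ← applyF_eq, applyF_sigmaJ]
  -- SigL is injective
  have Psi_Sig : ∀ c, PsiMap (SigL c) = (∑ j, C (lam j) * X j) * PsiMap c := by
    intro c
    rw [SigL_apply, map_sum, Finset.sum_mul]
    refine Finset.sum_congr rfl fun j _ => ?_
    rw [map_smul, PsiMap_sigmaJ, MvPolynomial.smul_eq_C_mul, mul_assoc]
  obtain ⟨j0, hj0⟩ : ∃ j0, lam j0 ≠ 0 := by
    by_contra hc
    push_neg at hc
    exact hlam (funext hc)
  have hl_ne : (∑ j, C (lam j) * X j : MvPolynomial (Fin n) ℂ) ≠ 0 := by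
    intro hc
    have hcoeff := congrArg (coeff (Finsupp.single j0 1)) hc
    rw [coeff_sum, coeff_zero] at hcoeff
    rw [Finset.sum_eq_single j0 (fun k _ hk => ?_) (by simp)] at hcoeff
    · rw [C_mul_X_eq_monomial, coeff_monomial, if_pos rfl] at hcoeff
      exact hj0 hcoeff
    · rw [C_mul_X_eq_monomial, coeff_monomial, if_neg, ]
      intro he
      exact hk (Finsupp.single_left_injective one_ne_zero he)
  have Sig_inj : Function.Injective SigL := by
    rw [injective_iff_map_eq_zero]
    intro c hc
    have h0 : (∑ j, C (lam j) * X j : MvPolynomial (Fin n) ℂ) * PsiMap c = 0 := by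
      rw [← Psi_Sig, hc, map_zero]
    rcases mul_eq_zero.1 h0 with h | h
    · exact absurd h hl_ne
    · exact PsiMap_injective (by rw [h, map_zero])
  -- SigL lands in functionals vanishing at the 0 index
  have Sig_zero : ∀ c, (SigL c) 0 = 0 := by
    intro c
    rw [SigL_apply, Finsupp.finset_sum_apply]
    apply Finset.sum_eq_zero
    intro j _
    rw [Finsupp.smul_apply, sigmaJ_apply_zero, smul_zero]
  -- δ₀ belongs to the dual space of I
  have delta0_mem : Finsupp.single 0 1 ∈ dualSpace xs I := by
    rw [mem_dualSpace]
    intro q hq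
    rw [applyF, Finsupp.sum_single_index (by simp), one_mul, DeltaAt_zero_index]
    exact hiso.1 q hq
  -- dualSpace J ≤ dualSpace I
  have hle : dualSpace xs J ≤ dualSpace xs I := by
    intro c hc
    rw [mem_dualSpace] at hc ⊢
    intro q hq
    exact hc q ((Ideal.span_mono Set.subset_union_left) hq)
  -- D_I is finite dimensional
  have hpos : 0 < Module.finrank ℂ (dualSpace xs I) := lt_of_lt_of_le (by norm_num) hmult
  haveI hDfin : FiniteDimensional ℂ (dualSpace xs I) := FiniteDimensional.of_finrank_pos hpos
  -- strictness
  have hne : dualSpace xs J ≠ dualSpace xs I := by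
    intro heq
    have hmaps : ∀ c ∈ dualSpace xs I, SigL c ∈ dualSpace xs I := by
      intro c hc
      rw [← heq] at hc
      rw [mem_dualSpace]
      intro q hq
      rw [applyF_Sig]
      exact (mem_dualSpace xs J c).1 hc (Dlam q) (claim1 q hq).2
    set T : dualSpace xs I →ₗ[ℂ] dualSpace xs I := SigL.restrict hmaps with hT
    have T_inj : Function.Injective T := by
      intro a b hab
      have : SigL a.1 = SigL b.1 := congrArg Subtype.val hab
      exact Subtype.ext (Sig_inj this)
    have T_surj : Function.Surjective T := 
      LinearMap.injective_iff_surjective (K := ℂ) (V := dualSpace xs I) |>.1 T_inj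
    obtain ⟨c, hc⟩ := T_surj ⟨Finsupp.single 0 1, delta0_mem⟩
    have hval : SigL c.1 = Finsupp.single 0 1 := congrArg Subtype.val hc
    have := Sig_zero c.1
    rw [hval, Finsupp.single_eq_same] at this
    exact one_ne_zero this
  exact Submodule.finrank_lt_finrank_of_lt (lt_of_le_of_ne hle hne)
end
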